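/- Let β ∈ [0,1), λ = 1−β > 0, and let n satisfy Assumption 1 with δ* = λ. Then the mean clone size E(Y_t) = e^{λt}·(∫_0^t n_τ e^{−λτ} dτ)/(∫_0^t n_τ dτ) tends to infinity as t → ∞, while (log E(Y_t))/t → 0; i.e. E(Y_t) diverges subexponentially. -/

import Mathlib

open Filter Real intervalIntegral MeasureTheory

/-- Assumption 1 on the wild-type growth function `n`. -/
def Assumption1 (n : ℝ → ℝ) : Prop :=
  (∀ τ : ℝ, τ < 0 → n τ = 0) ∧
  ContinuousOn n (Set.Ioi 0) ∧
  Filter.Tendsto n (nhdsWithin 0 (Set.Ioi 0)) (nhds (n 0)) ∧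
  (∀ τ : ℝ, 0 < τ → 0 < n τ) ∧
  MonotoneOn n (Set.Ioi 0) ∧
  (∀ x : ℝ, 0 ≤ x → ∃ L : ℝ, 0 < L ∧
    Filter.Tendsto (fun t : ℝ => n (t - x) / n t) Filter.atTop (nhds L))

lemma mono_of_a1 {n : ℝ → ℝ} (hn : Assumption1 n) : Monotone n := by
  obtain ⟨h0, hcont, hlim0, hpos, hmono, -⟩ := hn
  intro s t hst
  rcases lt_trichotomy t 0 with ht | ht | ht
  · rw [h0 t ht, h0 s (lt_of_le_of_lt hst ht)]
  · subst ht
    rcases eq_or_lt_of_le hst with rfl | hs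
    · rfl
    · rw [h0 s hs]
      have : ∀ᶠ x in nhdsWithin 0 (Set.Ioi (0:ℝ)), 0 ≤ n x := by
        filter_upwards [self_mem_nhdsWithin] with x hx using (hpos x hx).le
      exact ge_of_tendsto hlim0 this
  · rcases lt_trichotomy s 0 with hs | hs | hs
    · rw [h0 s hs]; exact (hpos t ht).le
    · subst hs
      -- n 0 ≤ n t : limit of n on (0, t]
      refine le_of_tendsto hlim0 ?_
      have : Set.Ioo (0:ℝ) t ∈ nhdsWithin 0 (Set.Ioi (0:ℝ)) := by
        apply mem_nhdsWithin.2
        exact ⟨Set.Iio t, isOpen_Iio, ht, by intro x ⟨hx1, hx2⟩; exact ⟨hx2, hx1⟩⟩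
      filter_upwards [this] with x ⟨hx0, hxt⟩ using hmono hx0 ht hxt.le
    · exact hmono hs ht hst

lemma tendsto_sub_div_self (T : ℝ) :
    Tendsto (fun t : ℝ => (t - T) / t) atTop (nhds 1) := by
  have h : Tendsto (fun t : ℝ => 1 - T * t⁻¹) atTop (nhds 1) := by
    have := tendsto_const_nhds (α := ℝ) (x := T) (f := atTop) |>.mul tendsto_inv_atTop_zero
    simpa using tendsto_const_nhds.sub this
  refine h.congr' ?_
  filter_upwards [eventually_gt_atTop 0] with t ht
  field_simp

lemma rate_upper {n : ℝ → ℝ} {lam u ρ T : ℝ} (hmono : Monotone n)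
    (hpos : ∀ τ : ℝ, 0 < τ → 0 < n τ)
    (hlam : Tendsto (fun t => Real.log (n t) / t) atTop (nhds lam))
    (hu : 0 < u) (hρ : 1 ≤ ρ) (hT : 0 < T)
    (hev : ∀ t, T ≤ t → n t ≤ ρ * n (t - u)) :
    lam ≤ Real.log ρ / u := by
  have hnT : 0 < n T := hpos T hT
  have claim : ∀ k : ℕ, ∀ t, t ≤ T + k * u → n t ≤ ρ ^ k * n T := by
    intro k
    induction k with
    | zero => intro t ht; simpa using hmono (by simpa using ht)
    | succ k ih =>
      intro t ht
      rcases le_or_gt t T with h | h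
      · calc n t ≤ n T := hmono h
          _ = 1 * n T := (one_mul _).symm
          _ ≤ ρ ^ (k+1) * n T := by
              have : (1:ℝ) ≤ ρ ^ (k+1) := one_le_pow₀ hρ
              exact mul_le_mul_of_nonneg_right this hnT.le
      · have h2 : n (t - u) ≤ ρ ^ k * n T := by
          apply ih
          have : ((k+1 : ℕ) : ℝ) = (k : ℝ) + 1 := by push_cast; ring
          rw [this] at ht
          linarith
        calc n t ≤ ρ * n (t - u) := hev t h.le
          _ ≤ ρ * (ρ ^ k * n T) := by
              exact mul_le_mul_of_nonneg_left h2 (by linarith)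
          _ = ρ ^ (k+1) * n T := by ring
  set G : ℝ → ℝ := fun t => ((t - T) / t) * (Real.log ρ / u) + (Real.log ρ + Real.log (n T)) / t
  have hG : Tendsto G atTop (nhds (Real.log ρ / u)) := by
    have h1 := (tendsto_sub_div_self T).mul (tendsto_const_nhds (x := Real.log ρ / u))
    have h2 : Tendsto (fun t : ℝ => (Real.log ρ + Real.log (n T)) / t) atTop (nhds 0) :=
      tendsto_const_nhds.div_atTop tendsto_id
    simpa using h1.add h2
  refine le_of_tendsto_of_tendsto hlam hG ?_
  filter_upwards [eventually_ge_atTop (max T 1)] with t ht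
  have htT : T ≤ t := le_trans (le_max_left _ _) ht
  have ht1 : (1:ℝ) ≤ t := le_trans (le_max_right _ _) ht
  have ht0 : 0 < t := lt_of_lt_of_le one_pos ht1
  set k := ⌈(t - T) / u⌉₊ with hk
  have hk1 : t ≤ T + k * u := by
    have := Nat.le_ceil ((t - T) / u)
    rw [div_le_iff₀ hu] at this
    linarith [this]
  have hk2 : (k : ℝ) ≤ (t - T) / u + 1 := by
    have h0 : (0:ℝ) ≤ (t - T) / u := div_nonneg (by linarith) hu.le
    exact (Nat.ceil_lt_add_one h0).le
  have hlog : Real.log (n t) ≤ (k : ℝ) * Real.log ρ + Real.log (n T) := by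
    have h1 : n t ≤ ρ ^ k * n T := claim k t hk1
    have h2 : Real.log (n t) ≤ Real.log (ρ ^ k * n T) :=
      Real.log_le_log (hpos t ht0) h1
    rwa [Real.log_mul (by positivity) hnT.ne', Real.log_pow] at h2
  have hlogρ : 0 ≤ Real.log ρ := Real.log_nonneg hρ
  have : Real.log (n t) ≤ ((t - T) / u + 1) * Real.log ρ + Real.log (n T) := by
    nlinarith [hlog]
  show Real.log (n t) / t ≤ G t
  rw [div_le_iff₀ ht0]
  have hGt : G t * t = ((t - T) / u + 1) * Real.log ρ + Real.log (n T) := by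
    simp only [G]
    field_simp
    ring
  rw [hGt]
  exact this

lemma rate_lower {n : ℝ → ℝ} {lam u ρ T : ℝ} (hmono : Monotone n)
    (hpos : ∀ τ : ℝ, 0 < τ → 0 < n τ)
    (hlam : Tendsto (fun t => Real.log (n t) / t) atTop (nhds lam))
    (hu : 0 < u) (hρ : 0 < ρ) (hT : 0 < T)
    (hev : ∀ t, T ≤ t → ρ * n (t - u) ≤ n t) :
    Real.log ρ / u ≤ lam := by
  have hnT : 0 < n T := hpos T hT
  have claim : ∀ k : ℕ, ∀ t, T ≤ t - k * u → ρ ^ k * n (t - k * u) ≤ n t := by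
    intro k
    induction k with
    | zero => intro t ht; simp
    | succ k ih =>
      intro t ht
      have hc : ((k+1 : ℕ) : ℝ) = (k : ℝ) + 1 := by push_cast; ring
      rw [hc] at ht ⊢
      have htT : T ≤ t := by nlinarith [hu.le, Nat.cast_nonneg (α := ℝ) k]
      have h1 : ρ * n (t - u) ≤ n t := hev t htT
      have h2 : ρ ^ k * n ((t - u) - k * u) ≤ n (t - u) := by
        apply ih; linarith
      have he : (t - u) - k * u = t - ((k:ℝ) + 1) * u := by ring
      rw [he] at h2
      calc ρ ^ (k+1) * n (t - ((k:ℝ)+1) * u) = ρ * (ρ ^ k * n (t - ((k:ℝ)+1) * u)) := by ring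
        _ ≤ ρ * n (t - u) := mul_le_mul_of_nonneg_left h2 hρ.le
        _ ≤ n t := h1
  set G : ℝ → ℝ := fun t => ((t - T) / t) * (Real.log ρ / u) + (Real.log (n T) - |Real.log ρ|) / t
  have hG : Tendsto G atTop (nhds (Real.log ρ / u)) := by
    have h1 := (tendsto_sub_div_self T).mul (tendsto_const_nhds (x := Real.log ρ / u))
    have h2 : Tendsto (fun t : ℝ => (Real.log (n T) - |Real.log ρ|) / t) atTop (nhds 0) :=
      tendsto_const_nhds.div_atTop tendsto_id
    simpa using h1.add h2
  refine le_of_tendsto_of_tendsto hG hlam ?_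
  filter_upwards [eventually_ge_atTop (max T 1)] with t ht
  have htT : T ≤ t := le_trans (le_max_left _ _) ht
  have ht1 : (1:ℝ) ≤ t := le_trans (le_max_right _ _) ht
  have ht0 : 0 < t := lt_of_lt_of_le one_pos ht1
  set k := ⌊(t - T) / u⌋₊ with hk
  have h0 : (0:ℝ) ≤ (t - T) / u := div_nonneg (by linarith) hu.le
  have hk1 : (k : ℝ) ≤ (t - T) / u := Nat.floor_le h0
  have hk1' : T ≤ t - k * u := by
    rw [le_div_iff₀ hu] at hk1
    linarith
  have hk2 : (t - T) / u - 1 ≤ (k : ℝ) := by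
    have := Nat.lt_floor_add_one ((t - T) / u)
    linarith
  have hlog : (k : ℝ) * Real.log ρ + Real.log (n T) ≤ Real.log (n t) := by
    have h1 : ρ ^ k * n T ≤ n t := by
      calc ρ ^ k * n T ≤ ρ ^ k * n (t - k * u) :=
            mul_le_mul_of_nonneg_left (hmono hk1') (by positivity)
        _ ≤ n t := claim k t hk1'
    have h2 : Real.log (ρ ^ k * n T) ≤ Real.log (n t) :=
      Real.log_le_log (by positivity) h1
    rwa [Real.log_mul (by positivity) hnT.ne', Real.log_pow] at h2
  have hkey : ((t - T) / u) * Real.log ρ - |Real.log ρ| ≤ (k : ℝ) * Real.log ρ := by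
    rcases le_or_gt 0 (Real.log ρ) with h | h
    · have : |Real.log ρ| = Real.log ρ := abs_of_nonneg h
      nlinarith
    · have : |Real.log ρ| = -Real.log ρ := abs_of_neg h
      nlinarith
  show G t ≤ Real.log (n t) / t
  rw [le_div_iff₀ ht0]
  have hGt : G t * t = ((t - T) / u) * Real.log ρ + (Real.log (n T) - |Real.log ρ|) := by
    simp only [G]
    field_simp
  rw [hGt]
  linarith

lemma ratio_limit {n : ℝ → ℝ} {lam : ℝ} (hmono : Monotone n)
    (hpos : ∀ τ : ℝ, 0 < τ → 0 < n τ)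
    (hratio : ∀ x : ℝ, 0 ≤ x → ∃ L : ℝ, 0 < L ∧
      Tendsto (fun t : ℝ => n (t - x) / n t) atTop (nhds L))
    (hlam : Tendsto (fun t => Real.log (n t) / t) atTop (nhds lam))
    {u : ℝ} (hu : 0 ≤ u) :
    Tendsto (fun t : ℝ => n (t - u) / n t) atTop (nhds (Real.exp (-(lam * u)))) := by
  rcases eq_or_lt_of_le hu with rfl | hu
  · have : (fun t : ℝ => n (t - 0) / n t) =ᶠ[atTop] (fun _ => 1) := by
      filter_upwards [eventually_gt_atTop 0] with t ht
      simp [div_self (hpos t ht).ne']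
    rw [Filter.tendsto_congr' this]
    simpa using tendsto_const_nhds
  obtain ⟨L, hL, hten⟩ := hratio u hu.le
  have hL1 : L ≤ 1 := by
    refine le_of_tendsto hten ?_
    filter_upwards [eventually_gt_atTop u] with t ht
    have h1 : 0 < t := lt_trans hu ht
    rw [div_le_one (hpos t h1)]
    exact hmono (by linarith)
  have htinv : Tendsto (fun t : ℝ => n t / n (t - u)) atTop (nhds L⁻¹) := by
    have h := hten.inv₀ hL.ne'
    refine h.congr' ?_
    filter_upwards [eventually_gt_atTop u] with t ht
    rw [inv_div]
  have hLinv1 : 1 ≤ L⁻¹ := (one_le_inv₀ hL).2 hL1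
  -- upper: exp (lam * u) ≤ L⁻¹
  have hupper : Real.exp (lam * u) ≤ L⁻¹ := by
    refine le_of_forall_pos_le_add ?_
    intro ε hε
    have hlt : L⁻¹ < L⁻¹ + ε := lt_add_of_pos_right _ hε
    have hev : ∀ᶠ t in atTop, n t ≤ (L⁻¹ + ε) * n (t - u) := by
      filter_upwards [htinv.eventually (eventually_le_nhds hlt), eventually_gt_atTop u]
        with t h1 h2
      have hp : 0 < n (t - u) := hpos _ (by linarith)
      rwa [div_le_iff₀ hp] at h1
    rw [eventually_atTop] at hev
    obtain ⟨T₀, hT₀⟩ := hev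
    have hle : lam ≤ Real.log (L⁻¹ + ε) / (max T₀ 1 |> fun _ => u) := by
      exact rate_upper hmono hpos hlam hu (by linarith) (lt_of_lt_of_le one_pos (le_max_right T₀ 1))
        (fun t ht => hT₀ t (le_trans (le_max_left _ _) ht))
    have h2 : lam * u ≤ Real.log (L⁻¹ + ε) := by
      rw [le_div_iff₀ hu] at hle
      linarith
    calc Real.exp (lam * u) ≤ Real.exp (Real.log (L⁻¹ + ε)) := Real.exp_le_exp.2 h2
      _ = L⁻¹ + ε := Real.exp_log (by linarith)
  -- lower: L⁻¹ ≤ exp (lam * u)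
  have hlower : L⁻¹ ≤ Real.exp (lam * u) := by
    refine le_of_forall_pos_le_add ?_
    intro ε hε
    rcases le_or_gt L⁻¹ ε with h | h
    · linarith [Real.exp_pos (lam * u)]
    have hρ : 0 < L⁻¹ - ε := by linarith
    have hlt : L⁻¹ - ε < L⁻¹ := by linarith
    have hev : ∀ᶠ t in atTop, (L⁻¹ - ε) * n (t - u) ≤ n t := by
      filter_upwards [htinv.eventually (eventually_ge_nhds hlt), eventually_gt_atTop u]
        with t h1 h2
      have hp : 0 < n (t - u) := hpos _ (by linarith)
      rwa [le_div_iff₀ hp] at h1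
    rw [eventually_atTop] at hev
    obtain ⟨T₀, hT₀⟩ := hev
    have hle : Real.log (L⁻¹ - ε) / u ≤ lam :=
      rate_lower hmono hpos hlam hu hρ (lt_of_lt_of_le one_pos (le_max_right T₀ 1))
        (fun t ht => hT₀ t (le_trans (le_max_left _ _) ht))
    have h2 : Real.log (L⁻¹ - ε) ≤ lam * u := by
      rw [div_le_iff₀ hu] at hle
      linarith
    have := Real.exp_le_exp.2 h2
    rw [Real.exp_log hρ] at this
    linarith
  have hLeq : L = Real.exp (-(lam * u)) := by
    have : L⁻¹ = Real.exp (lam * u) := le_antisymm hlower hupper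
    rw [Real.exp_neg, ← this, inv_inv]
  rwa [hLeq] at hten

-- integrability of g
lemma g_integrable {n : ℝ → ℝ} (hmono : Monotone n) (lam c d : ℝ) :
    IntervalIntegrable (fun τ => n τ * Real.exp (-lam * τ)) volume c d := by
  apply IntervalIntegrable.mul_continuousOn (hmono.intervalIntegrable)
  exact (Real.continuous_exp.comp (continuous_const.mul continuous_id)).continuousOn

lemma phi_tendsto {n : ℝ → ℝ} {lam : ℝ} (hmono : Monotone n)
    (hpos : ∀ τ : ℝ, 0 < τ → 0 < n τ) (hnn : ∀ τ : ℝ, 0 ≤ n τ)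
    (hr : ∀ u : ℝ, 0 ≤ u → Tendsto (fun t : ℝ => n (t - u) / n t) atTop
      (nhds (Real.exp (-(lam * u)))))
    {T : ℝ} (hT : 0 < T) :
    Tendsto (fun t : ℝ => ∫ u in (0:ℝ)..T, (n (t - u) / n t) * Real.exp (lam * u))
      atTop (nhds T) := by
  have key := intervalIntegral.tendsto_integral_filter_of_dominated_convergence
    (μ := volume) (a := 0) (b := T) (l := atTop)
    (F := fun t u => (n (t - u) / n t) * Real.exp (lam * u))
    (f := fun u => Real.exp (-(lam * u)) * Real.exp (lam * u))
    (bound := fun u => Real.exp (lam * u))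
    ?_ ?_ ?_ ?_
  · have : (∫ u in (0:ℝ)..T, Real.exp (-(lam * u)) * Real.exp (lam * u)) = T := by
      have : ∀ u : ℝ, Real.exp (-(lam * u)) * Real.exp (lam * u) = 1 := by
        intro u; rw [← Real.exp_add]; simp
      simp [this]
    rwa [this] at key
  · filter_upwards [eventually_gt_atTop 0] with t ht
    have hmeas : Measurable n := hmono.measurable
    exact ((((hmeas.comp (measurable_const.sub measurable_id)).div measurable_const)).mul
      (Real.measurable_exp.comp (measurable_const.mul measurable_id))).aestronglyMeasurable
  · filter_upwards [eventually_gt_atTop (max T 0)] with t ht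
    refine Filter.Eventually.of_forall ?_
    intro u hu
    rw [Set.uIoc_of_le hT.le] at hu
    have htpos : 0 < t := lt_of_le_of_lt (le_max_right T 0) ht
    have h1 : 0 ≤ n (t - u) / n t := div_nonneg (hnn _) (hnn _)
    have h2 : n (t - u) / n t ≤ 1 := by
      rw [div_le_one (hpos t htpos)]
      exact hmono (by linarith [hu.1])
    rw [Real.norm_eq_abs, abs_of_nonneg (mul_nonneg h1 (Real.exp_pos _).le)]
    calc (n (t - u) / n t) * Real.exp (lam * u) ≤ 1 * Real.exp (lam * u) :=
          mul_le_mul_of_nonneg_right h2 (Real.exp_pos _).le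
      _ = Real.exp (lam * u) := one_mul _
  · exact ((Real.continuous_exp.comp (continuous_const.mul continuous_id)).intervalIntegrable 0 T)
  · refine Filter.Eventually.of_forall ?_
    intro u hu
    rw [Set.uIoc_of_le hT.le] at hu
    exact (hr u hu.1.le).mul_const _

lemma f_large {n : ℝ → ℝ} {lam : ℝ} (hmono : Monotone n)
    (hpos : ∀ τ : ℝ, 0 < τ → 0 < n τ) (hnn : ∀ τ : ℝ, 0 ≤ n τ)
    (hr : ∀ u : ℝ, 0 ≤ u → Tendsto (fun t : ℝ => n (t - u) / n t) atTop
      (nhds (Real.exp (-(lam * u)))))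
    (C : ℝ) :
    ∀ᶠ t in atTop, C * (n t * Real.exp (-lam * t)) ≤ ∫ τ in (0:ℝ)..t, n τ * Real.exp (-lam * τ) := by
  set T : ℝ := max C 0 + 1 with hTdef
  have hT : 0 < T := by positivity
  have hCT : C < T := lt_of_le_of_lt (le_max_left C 0) (by simp [hTdef])
  have hΦ := phi_tendsto hmono hpos hnn hr hT
  filter_upwards [hΦ.eventually (eventually_gt_nhds hCT), eventually_gt_atTop T] with t hΦt htT
  have ht0 : 0 < t := lt_trans hT htT
  have hg : 0 < n t * Real.exp (-lam * t) := mul_pos (hpos t ht0) (Real.exp_pos _)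
  -- change of variables identity
  have hident : (∫ u in (0:ℝ)..T, (n (t - u) / n t) * Real.exp (lam * u))
      = (∫ τ in (t - T)..t, n τ * Real.exp (-lam * τ)) / (n t * Real.exp (-lam * t)) := by
    have h1 : ∀ u : ℝ, (n (t - u) / n t) * Real.exp (lam * u)
        = (n (t - u) * Real.exp (-lam * (t - u))) / (n t * Real.exp (-lam * t)) := by
      intro u
      have he : Real.exp (-lam * (t - u)) = Real.exp (-lam * t) * Real.exp (lam * u) := by
        rw [← Real.exp_add]; congr 1; ring
      rw [he, show n (t-u) * (Real.exp (-lam*t) * Real.exp (lam*u))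
          = (n (t-u) * Real.exp (lam*u)) * Real.exp (-lam*t) from by ring,
        mul_div_mul_right _ _ (Real.exp_pos (-lam*t)).ne', div_mul_eq_mul_div]
    calc (∫ u in (0:ℝ)..T, (n (t - u) / n t) * Real.exp (lam * u))
        = ∫ u in (0:ℝ)..T, (n (t - u) * Real.exp (-lam * (t - u))) / (n t * Real.exp (-lam * t)) := by
          simp only [h1]
      _ = (∫ u in (0:ℝ)..T, n (t - u) * Real.exp (-lam * (t - u))) / (n t * Real.exp (-lam * t)) :=
          intervalIntegral.integral_div _ _
      _ = (∫ τ in (t - T)..t, n τ * Real.exp (-lam * τ)) / (n t * Real.exp (-lam * t)) := by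
          rw [intervalIntegral.integral_comp_sub_left (fun τ => n τ * Real.exp (-lam * τ)) t]
          norm_num
  have hsplit : (∫ τ in (t - T)..t, n τ * Real.exp (-lam * τ))
      ≤ ∫ τ in (0:ℝ)..t, n τ * Real.exp (-lam * τ) := by
    have hadd := intervalIntegral.integral_add_adjacent_intervals
      (g_integrable hmono lam 0 (t - T)) (g_integrable hmono lam (t - T) t)
    have hnonneg : 0 ≤ ∫ τ in (0:ℝ)..(t - T), n τ * Real.exp (-lam * τ) := by
      apply intervalIntegral.integral_nonneg (by linarith)
      intro x _
      exact mul_nonneg (hnn x) (Real.exp_pos _).le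
    linarith [hadd]
  have : C * (n t * Real.exp (-lam * t))
      ≤ (∫ τ in (t - T)..t, n τ * Real.exp (-lam * τ)) := by
    have := mul_le_mul_of_nonneg_right hΦt.le hg.le
    rw [hident, div_mul_cancel₀ _ hg.ne'] at this
    linarith
  linarith

lemma part1 {n : ℝ → ℝ} {lam : ℝ} (hmono : Monotone n)
    (hpos : ∀ τ : ℝ, 0 < τ → 0 < n τ) (hnn : ∀ τ : ℝ, 0 ≤ n τ) (hlam : 0 < lam)
    (hflarge : ∀ C : ℝ, ∀ᶠ t in atTop,
      C * (n t * Real.exp (-lam * t)) ≤ ∫ τ in (0:ℝ)..t, n τ * Real.exp (-lam * τ)) :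
    Tendsto (fun t : ℝ =>
        Real.exp (lam * t) * (∫ τ in (0:ℝ)..t, n τ * Real.exp (-lam * τ)) /
          (∫ τ in (0:ℝ)..t, n τ)) atTop atTop := by
  set g : ℝ → ℝ := fun τ => n τ * Real.exp (-lam * τ) with hgdef
  have hgnn : ∀ τ, 0 ≤ g τ := fun τ => mul_nonneg (hnn τ) (Real.exp_pos _).le
  have hfpos : ∀ t : ℝ, 0 < t → 0 < ∫ τ in (0:ℝ)..t, g τ := by
    intro t ht
    exact intervalIntegral.intervalIntegral_pos_of_pos_on (g_integrable hmono lam 0 t)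
      (fun x hx => mul_pos (hpos x hx.1) (Real.exp_pos _)) ht
  have hapos : ∀ t : ℝ, 0 < t → 0 < ∫ τ in (0:ℝ)..t, n τ := by
    intro t ht
    exact intervalIntegral.intervalIntegral_pos_of_pos_on (hmono.intervalIntegrable)
      (fun x hx => hpos x hx.1) ht
  rw [tendsto_atTop]
  intro M
  set M' : ℝ := max M 0 + 1 with hM'
  have hM'pos : 0 < M' := by positivity
  -- choose s with exp (lam*s)/2 ≥ M'
  obtain ⟨s, hs0, hsM⟩ : ∃ s : ℝ, 0 ≤ s ∧ M' ≤ Real.exp (lam * s) / 2 := by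
    have h1 : Tendsto (fun s : ℝ => Real.exp (lam * s) / 2) atTop atTop := by
      apply Tendsto.atTop_div_const (by norm_num)
      exact (Real.tendsto_exp_atTop).comp (tendsto_const_nhds.pos_mul_atTop hlam tendsto_id)
    obtain ⟨s, hs⟩ := ((h1.eventually_ge_atTop M').and (eventually_ge_atTop (0:ℝ))).exists
    exact ⟨s, hs.2, hs.1⟩
  set C : ℝ := s * Real.exp (lam * s) + 1 with hC
  have hCpos : 0 < C := by positivity
  filter_upwards [hflarge C, eventually_gt_atTop (s + 1)] with t hft hts
  have ht0 : 0 < t := by linarith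
  have htspos : 0 ≤ t - s := by linarith
  have hfge : 0 < ∫ τ in (0:ℝ)..t, g τ := hfpos t ht0
  have hage : 0 < ∫ τ in (0:ℝ)..t, n τ := hapos t ht0
  -- split a t
  have hadd := intervalIntegral.integral_add_adjacent_intervals
    (hmono.intervalIntegrable (μ := volume) (a := 0) (b := t - s)) (hmono.intervalIntegrable (μ := volume) (a := t - s) (b := t))
  -- first piece
  have hfirst : (∫ τ in (0:ℝ)..(t - s), n τ)
      ≤ Real.exp (lam * (t - s)) * ∫ τ in (0:ℝ)..t, g τ := by
    have h1 : (∫ τ in (0:ℝ)..(t - s), n τ)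
        ≤ ∫ τ in (0:ℝ)..(t - s), Real.exp (lam * (t - s)) * g τ := by
      apply intervalIntegral.integral_mono_on htspos hmono.intervalIntegrable
        ((g_integrable hmono lam 0 (t - s)).const_mul _)
      intro x hx
      calc n x = n x * 1 := (mul_one _).symm
        _ ≤ n x * Real.exp (lam * (t - s) + -lam * x) := by
            apply mul_le_mul_of_nonneg_left _ (hnn x)
            apply Real.one_le_exp
            nlinarith [hx.1, hx.2, hlam.le]
        _ = Real.exp (lam * (t - s)) * (n x * Real.exp (-lam * x)) := by
            rw [Real.exp_add]; ring
    have h2 : (∫ τ in (0:ℝ)..(t - s), g τ) ≤ ∫ τ in (0:ℝ)..t, g τ := by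
      have hadd2 := intervalIntegral.integral_add_adjacent_intervals
        (g_integrable hmono lam 0 (t - s)) (g_integrable hmono lam (t - s) t)
      have : 0 ≤ ∫ τ in (t - s)..t, g τ :=
        intervalIntegral.integral_nonneg (by linarith) (fun x _ => hgnn x)
      linarith [hadd2]
    rw [intervalIntegral.integral_const_mul] at h1
    calc (∫ τ in (0:ℝ)..(t - s), n τ) ≤ Real.exp (lam * (t - s)) * ∫ τ in (0:ℝ)..(t - s), g τ := h1
      _ ≤ Real.exp (lam * (t - s)) * ∫ τ in (0:ℝ)..t, g τ :=
          mul_le_mul_of_nonneg_left h2 (Real.exp_pos _).le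
  -- second piece
  have hsecond : (∫ τ in (t - s)..t, n τ) ≤ s * (Real.exp (lam * t) * g t) := by
    have h1 : (∫ τ in (t - s)..t, n τ) ≤ ∫ _ in (t - s)..t, n t := by
      apply intervalIntegral.integral_mono_on (by linarith) hmono.intervalIntegrable
        intervalIntegrable_const
      intro x hx
      exact hmono hx.2
    rw [intervalIntegral.integral_const] at h1
    have h2 : Real.exp (lam * t) * g t = n t := by
      simp only [hgdef]
      rw [show Real.exp (lam*t) * (n t * Real.exp (-lam*t)) = n t * (Real.exp (lam*t) * Real.exp (-lam*t)) from by ring,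
        ← Real.exp_add]
      simp
    rw [h2]
    simpa using h1
  -- combine
  have habound : (∫ τ in (0:ℝ)..t, n τ)
      ≤ Real.exp (lam * t) * (2 * Real.exp (-(lam * s)) * ∫ τ in (0:ℝ)..t, g τ) := by
    have hsg : s * g t ≤ Real.exp (-(lam * s)) * ∫ τ in (0:ℝ)..t, g τ := by
      have h1 : s * (C * g t) ≤ s * ∫ τ in (0:ℝ)..t, g τ :=
        mul_le_mul_of_nonneg_left hft hs0
      have h2 : s ≤ C * Real.exp (-(lam * s)) := by
        rw [hC, add_mul, one_mul, mul_assoc, ← Real.exp_add]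
        simp
        positivity
      nlinarith [hgnn t, hfge.le, mul_le_mul_of_nonneg_right h2 hfge.le, hCpos]
    have he : Real.exp (lam * (t - s)) = Real.exp (lam * t) * Real.exp (-(lam * s)) := by
      rw [← Real.exp_add]; congr 1; ring
    calc (∫ τ in (0:ℝ)..t, n τ)
        = (∫ τ in (0:ℝ)..(t - s), n τ) + ∫ τ in (t - s)..t, n τ := hadd.symm
      _ ≤ Real.exp (lam * (t - s)) * (∫ τ in (0:ℝ)..t, g τ) + s * (Real.exp (lam * t) * g t) :=
          add_le_add hfirst hsecond
      _ ≤ Real.exp (lam * t) * Real.exp (-(lam * s)) * (∫ τ in (0:ℝ)..t, g τ)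
            + Real.exp (lam * t) * (Real.exp (-(lam * s)) * ∫ τ in (0:ℝ)..t, g τ) := by
          rw [he]
          have := mul_le_mul_of_nonneg_left hsg (Real.exp_pos (lam * t)).le
          linarith [this]
      _ = Real.exp (lam * t) * (2 * Real.exp (-(lam * s)) * ∫ τ in (0:ℝ)..t, g τ) := by ring
  -- conclude
  rw [le_div_iff₀ hage]
  have hM2 : M ≤ Real.exp (lam * s) / 2 := by
    have : M ≤ M' := by rw [hM']; nlinarith [le_max_left M 0]
    linarith
  calc M * ∫ τ in (0:ℝ)..t, n τ
      ≤ (Real.exp (lam * s) / 2) * (Real.exp (lam * t) * (2 * Real.exp (-(lam * s)) * ∫ τ in (0:ℝ)..t, g τ)) := by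
        apply mul_le_mul hM2 habound hage.le (by positivity)
    _ = (Real.exp (lam * s) * Real.exp (-(lam * s))) * (Real.exp (lam * t) * ∫ τ in (0:ℝ)..t, g τ) := by ring
    _ = Real.exp (lam * t) * ∫ τ in (0:ℝ)..t, g τ := by rw [← Real.exp_add]; simp

lemma loga_tendsto {n : ℝ → ℝ} {lam : ℝ} (hmono : Monotone n)
    (hpos : ∀ τ : ℝ, 0 < τ → 0 < n τ) (hnn : ∀ τ : ℝ, 0 ≤ n τ)
    (hlam : Tendsto (fun t => Real.log (n t) / t) atTop (nhds lam)) :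
    Tendsto (fun t : ℝ => Real.log (∫ τ in (0:ℝ)..t, n τ) / t) atTop (nhds lam) := by
  have hL : Tendsto (fun t : ℝ => (Real.log (n (t - 1)) / (t - 1)) * ((t - 1) / t)) atTop
      (nhds lam) := by
    have h1 : Tendsto (fun t : ℝ => Real.log (n (t - 1)) / (t - 1)) atTop (nhds lam) :=
      hlam.comp (tendsto_atTop_add_const_right _ (-1) tendsto_id)
    simpa using h1.mul (tendsto_sub_div_self 1)
  have hU : Tendsto (fun t : ℝ => Real.log t / t + Real.log (n t) / t) atTop (nhds (0 + lam)) :=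
    (Real.isLittleO_log_id_atTop.tendsto_div_nhds_zero).add hlam
  rw [show lam = 0 + lam from (zero_add lam).symm]
  apply tendsto_of_tendsto_of_tendsto_of_le_of_le' (by rw [zero_add]; exact hL) hU
  · -- lower bound
    filter_upwards [eventually_ge_atTop (2:ℝ)] with t ht
    have ht0 : (0:ℝ) < t := by linarith
    have ht1 : (0:ℝ) < t - 1 := by linarith
    have hna : n (t - 1) ≤ ∫ τ in (0:ℝ)..t, n τ := by
      have hadd := intervalIntegral.integral_add_adjacent_intervals
        (hmono.intervalIntegrable (μ := volume) (a := 0) (b := t-1))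
        (hmono.intervalIntegrable (μ := volume) (a := t-1) (b := t))
      have h1 : 0 ≤ ∫ τ in (0:ℝ)..(t-1), n τ := by
        exact intervalIntegral.integral_nonneg (by linarith) (fun x _ => hnn x)
      have h2 : (1:ℝ) * n (t-1) ≤ ∫ τ in (t-1)..t, n τ := by
        have := intervalIntegral.integral_mono_on (a := t-1) (b := t) (by linarith)
          intervalIntegrable_const (hmono.intervalIntegrable (μ := volume))
          (fun x hx => hmono hx.1)
        rw [intervalIntegral.integral_const] at this
        simpa using this
      linarith
    have hlog : Real.log (n (t-1)) ≤ Real.log (∫ τ in (0:ℝ)..t, n τ) :=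
      Real.log_le_log (hpos _ ht1) hna
    have heq : (Real.log (n (t - 1)) / (t - 1)) * ((t - 1) / t) = Real.log (n (t-1)) / t := by
      field_simp
    rw [heq]
    gcongr
  · -- upper bound
    filter_upwards [eventually_ge_atTop (1:ℝ)] with t ht
    have ht0 : (0:ℝ) < t := by linarith
    have hat : (∫ τ in (0:ℝ)..t, n τ) ≤ t * n t := by
      have := intervalIntegral.integral_mono_on (a := 0) (b := t) (by linarith)
        (hmono.intervalIntegrable (μ := volume)) intervalIntegrable_const
        (fun x hx => hmono hx.2)
      rw [intervalIntegral.integral_const] at this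
      simpa using this
    have hapos : 0 < ∫ τ in (0:ℝ)..t, n τ :=
      intervalIntegral.intervalIntegral_pos_of_pos_on (hmono.intervalIntegrable)
        (fun x hx => hpos x hx.1) ht0
    have hlog : Real.log (∫ τ in (0:ℝ)..t, n τ) ≤ Real.log t + Real.log (n t) := by
      rw [← Real.log_mul ht0.ne' (hpos t ht0).ne']
      exact Real.log_le_log hapos hat
    rw [← add_div]
    gcongr

lemma logf_tendsto {n : ℝ → ℝ} {lam : ℝ} (hmono : Monotone n)
    (hpos : ∀ τ : ℝ, 0 < τ → 0 < n τ) (hnn : ∀ τ : ℝ, 0 ≤ n τ)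
    (hlam : Tendsto (fun t => Real.log (n t) / t) atTop (nhds lam)) :
    Tendsto (fun t : ℝ => Real.log (∫ τ in (0:ℝ)..t, n τ * Real.exp (-lam * τ)) / t)
      atTop (nhds 0) := by
  set f : ℝ → ℝ := fun t => ∫ τ in (0:ℝ)..t, n τ * Real.exp (-lam * τ) with hfdef
  have hfpos : ∀ t : ℝ, 0 < t → 0 < f t := by
    intro t ht
    exact intervalIntegral.intervalIntegral_pos_of_pos_on (g_integrable hmono lam 0 t)
      (fun x hx => mul_pos (hpos x hx.1) (Real.exp_pos _)) ht
  have hfmono : ∀ s t : ℝ, 0 ≤ s → s ≤ t → f s ≤ f t := by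
    intro s t hs hst
    have hadd := intervalIntegral.integral_add_adjacent_intervals
      (g_integrable hmono lam 0 s) (g_integrable hmono lam s t)
    have h1 : 0 ≤ ∫ τ in s..t, n τ * Real.exp (-lam * τ) :=
      intervalIntegral.integral_nonneg hst
        (fun x _ => mul_nonneg (hnn x) (Real.exp_pos _).le)
    show f s ≤ f t
    rw [hfdef]
    simp only []
    linarith [hadd]
  rw [tendsto_order]
  constructor
  · -- lower
    intro c hc
    have h1 : Tendsto (fun t : ℝ => Real.log (f 1) / t) atTop (nhds 0) :=
      tendsto_const_nhds.div_atTop tendsto_id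
    filter_upwards [h1.eventually (eventually_gt_nhds hc), eventually_ge_atTop (1:ℝ)]
      with t h1t ht
    have ht0 : (0:ℝ) < t := by linarith
    have : Real.log (f 1) ≤ Real.log (f t) :=
      Real.log_le_log (hfpos 1 one_pos) (hfmono 1 t (by norm_num) ht)
    calc c < Real.log (f 1) / t := h1t
      _ ≤ Real.log (f t) / t := by gcongr
  · -- upper
    intro c hc
    set ε : ℝ := c / 2 with hε
    have hεpos : 0 < ε := by positivity
    have hεc : ε < c := by linarith
    -- get T with log n τ / τ ≤ lam + ε for τ ≥ T
    have hev : ∀ᶠ τ : ℝ in atTop, Real.log (n τ) / τ ≤ lam + ε :=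
      hlam.eventually (eventually_le_nhds (by linarith))
    rw [eventually_atTop] at hev
    obtain ⟨T₀, hT₀⟩ := hev
    set T : ℝ := max T₀ 1 with hTdef
    have hT1 : (1:ℝ) ≤ T := le_max_right _ _
    have hgbound : ∀ τ, T ≤ τ → n τ * Real.exp (-lam * τ) ≤ Real.exp (ε * τ) := by
      intro τ hτ
      have hτ0 : 0 < τ := lt_of_lt_of_le one_pos (le_trans hT1 hτ)
      have h1 : Real.log (n τ) ≤ (lam + ε) * τ := by
        have := hT₀ τ (le_trans (le_max_left _ _) hτ)
        rw [div_le_iff₀ hτ0] at this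
        linarith
      have h2 : n τ ≤ Real.exp ((lam + ε) * τ) := by
        calc n τ = Real.exp (Real.log (n τ)) := (Real.exp_log (hpos τ hτ0)).symm
          _ ≤ Real.exp ((lam + ε) * τ) := Real.exp_le_exp.2 h1
      calc n τ * Real.exp (-lam * τ) ≤ Real.exp ((lam + ε) * τ) * Real.exp (-lam * τ) :=
            mul_le_mul_of_nonneg_right h2 (Real.exp_pos _).le
        _ = Real.exp (ε * τ) := by rw [← Real.exp_add]; congr 1; ring
    -- f t ≤ f T + t * exp (ε t) for t ≥ T
    have hfbound : ∀ t, T ≤ t → f t ≤ f T + t * Real.exp (ε * t) := by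
      intro t ht
      have ht0 : 0 < t := lt_of_lt_of_le one_pos (le_trans hT1 ht)
      have hadd := intervalIntegral.integral_add_adjacent_intervals
        (g_integrable hmono lam 0 T) (g_integrable hmono lam T t)
      have h1 : (∫ τ in T..t, n τ * Real.exp (-lam * τ)) ≤ ∫ _ in T..t, Real.exp (ε * t) := by
        apply intervalIntegral.integral_mono_on ht (g_integrable hmono lam T t)
          intervalIntegrable_const
        intro x hx
        calc n x * Real.exp (-lam * x) ≤ Real.exp (ε * x) := hgbound x hx.1
          _ ≤ Real.exp (ε * t) := Real.exp_le_exp.2 (by nlinarith [hx.2, hεpos.le])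
      rw [intervalIntegral.integral_const, smul_eq_mul] at h1
      have h2 : (t - T) * Real.exp (ε * t) ≤ t * Real.exp (ε * t) := by
        apply mul_le_mul_of_nonneg_right (by linarith) (Real.exp_pos _).le
      show f t ≤ f T + t * Real.exp (ε * t)
      calc f t = f T + ∫ τ in T..t, n τ * Real.exp (-lam * τ) := by rw [hfdef]; simp only []; linarith [hadd]
        _ ≤ f T + (t - T) * Real.exp (ε * t) := by linarith
        _ ≤ f T + t * Real.exp (ε * t) := by linarith
    -- V bound
    set V : ℝ → ℝ := fun t => Real.log 2 / t + Real.log t / t + ε with hV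
    have hVt : Tendsto V atTop (nhds ε) := by
      have h1 : Tendsto (fun t : ℝ => Real.log 2 / t) atTop (nhds 0) :=
        tendsto_const_nhds.div_atTop tendsto_id
      have h2 := Real.isLittleO_log_id_atTop.tendsto_div_nhds_zero
      have := (h1.add h2).add (tendsto_const_nhds (x := ε))
      simpa using this
    filter_upwards [hVt.eventually (eventually_lt_nhds hεc), eventually_ge_atTop T,
      eventually_ge_atTop (f T)] with t hVlt htT htfT
    have ht0 : 0 < t := lt_of_lt_of_le one_pos (le_trans hT1 htT)
    have hfT : f T ≤ t * Real.exp (ε * t) := by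
      calc f T ≤ t := htfT
        _ ≤ t * Real.exp (ε * t) := le_mul_of_one_le_right ht0.le
          (Real.one_le_exp (by positivity))
    have hft2 : f t ≤ 2 * (t * Real.exp (ε * t)) := by
      have := hfbound t htT
      linarith
    have hlog : Real.log (f t) ≤ Real.log 2 + Real.log t + ε * t := by
      calc Real.log (f t) ≤ Real.log (2 * (t * Real.exp (ε * t))) :=
            Real.log_le_log (hfpos t ht0) hft2
        _ = Real.log 2 + (Real.log t + ε * t) := by
            rw [Real.log_mul (by norm_num) (by positivity),
              Real.log_mul ht0.ne' (Real.exp_pos _).ne', Real.log_exp]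
        _ = Real.log 2 + Real.log t + ε * t := by ring
    calc Real.log (f t) / t ≤ (Real.log 2 + Real.log t + ε * t) / t := by gcongr
      _ = V t := by rw [hV]; field_simp
      _ < c := hVlt

/-- If `δ* = λ = 1 − β > 0`, the mean clone size
`E(Y_t) = e^{λt} (∫_0^t n_τ e^{−λτ} dτ)/(∫_0^t n_τ dτ)` diverges subexponentially:
it tends to `∞` while `(log E(Y_t))/t → 0`. -/
theorem mean_clone_size_neutral_subexponential_divergence
    (β : ℝ) (hβ : β ∈ Set.Ico (0 : ℝ) 1)
    (n : ℝ → ℝ) (hn : Assumption1 n)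
    (hδlim : Filter.Tendsto (fun t : ℝ => Real.log (n t) / t) Filter.atTop
      (nhds (1 - β))) :
    Filter.Tendsto
      (fun t : ℝ =>
        Real.exp ((1 - β) * t) * (∫ τ in (0:ℝ)..t, n τ * Real.exp (-(1 - β) * τ)) /
          (∫ τ in (0:ℝ)..t, n τ))
      Filter.atTop Filter.atTop ∧
    Filter.Tendsto
      (fun t : ℝ =>
        Real.log
          (Real.exp ((1 - β) * t) * (∫ τ in (0:ℝ)..t, n τ * Real.exp (-(1 - β) * τ)) /
            (∫ τ in (0:ℝ)..t, n τ)) / t)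
      Filter.atTop (nhds 0) := by
  obtain ⟨hβ0, hβ1⟩ := hβ
  set lam : ℝ := 1 - β with hlamdef
  have hlam0 : 0 < lam := by simp [hlamdef]; linarith
  obtain ⟨h0, hcont, hlim0, hpos, hmonoOn, hratio⟩ := hn
  have hmono : Monotone n := mono_of_a1 ⟨h0, hcont, hlim0, hpos, hmonoOn, hratio⟩
  have hnn : ∀ τ : ℝ, 0 ≤ n τ := by
    intro τ
    rcases lt_or_ge τ 0 with h | h
    · rw [h0 τ h]
    · rw [← h0 (-1) (by norm_num)]
      exact hmono (by linarith)
  have hr : ∀ u : ℝ, 0 ≤ u → Tendsto (fun t : ℝ => n (t - u) / n t) atTop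
      (nhds (Real.exp (-(lam * u)))) :=
    fun u hu => ratio_limit hmono hpos hratio hδlim hu
  have hflarge := f_large hmono hpos hnn hr
  have hfpos : ∀ t : ℝ, 0 < t → 0 < ∫ τ in (0:ℝ)..t, n τ * Real.exp (-lam * τ) := by
    intro t ht
    exact intervalIntegral.intervalIntegral_pos_of_pos_on (g_integrable hmono lam 0 t)
      (fun x hx => mul_pos (hpos x hx.1) (Real.exp_pos _)) ht
  have hapos : ∀ t : ℝ, 0 < t → 0 < ∫ τ in (0:ℝ)..t, n τ := by
    intro t ht
    exact intervalIntegral.intervalIntegral_pos_of_pos_on (hmono.intervalIntegrable)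
      (fun x hx => hpos x hx.1) ht
  constructor
  · exact part1 hmono hpos hnn hlam0 hflarge
  · have hloga := loga_tendsto hmono hpos hnn hδlim
    have hlogf := logf_tendsto hmono hpos hnn hδlim
    have hcomb : Tendsto (fun t : ℝ =>
        lam + Real.log (∫ τ in (0:ℝ)..t, n τ * Real.exp (-lam * τ)) / t
          - Real.log (∫ τ in (0:ℝ)..t, n τ) / t) atTop (nhds (lam + 0 - lam)) :=
      (tendsto_const_nhds.add hlogf).sub hloga
    rw [show lam + 0 - lam = (0:ℝ) from by ring] at hcomb
    refine Filter.Tendsto.congr' ?_ hcomb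
    filter_upwards [eventually_ge_atTop (1:ℝ)] with t ht
    have ht0 : (0:ℝ) < t := by linarith
    have hf := hfpos t ht0
    have ha := hapos t ht0
    rw [Real.log_div (by positivity) ha.ne', Real.log_mul (Real.exp_pos _).ne' hf.ne',
      Real.log_exp]
    field_simp
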